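/- Let $(Y, d)$ be a metric space, $\Lambda \subset Y$ a compact subset, $\mathcal{U} \supset \Lambda$ open, and $\varphi_i : Y \to Y$ a sequence of homeomorphisms converging uniformly to a continuous map $\varphi : Y \to Y$ satisfying $\varphi(Y \setminus \Lambda) \cap \varphi(\Lambda) = \emptyset$. Assume additionally $Y \setminus \mathcal{U}$ is compact. Then there exists $m \in \mathbb{N}$ such that $\varphi(\Lambda) \subset \varphi_i(\mathcal{U})$ for all $i \ge m$. -/

import Mathlib

/-- if homeomorphisms `φᵢ` converge uniformly to `φ` with
`φ(Y∖Λ) ∩ φ(Λ) = ∅`, `Λ` compact, `U ⊇ Λ` open with compact complement, then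
`φ(Λ) ⊆ φᵢ(U)` for all large `i`. -/
theorem stmt18 {Y : Type*} [MetricSpace Y] (Λ : Set Y) (hΛ : IsCompact Λ)
    (U : Set Y) (hU : IsOpen U) (hΛU : Λ ⊆ U) (hUc : IsCompact Uᶜ)
    (φi : ℕ → Y ≃ₜ Y) (φ : Y → Y)
    (hconv : TendstoUniformly (fun i => ⇑(φi i)) φ Filter.atTop)
    (hdisj : φ '' Λᶜ ∩ φ '' Λ = ∅) :
    ∃ m : ℕ, ∀ i ≥ m, φ '' Λ ⊆ (φi i) '' U := by
  have hφ : Continuous φ :=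
    hconv.continuous (Filter.Eventually.of_forall fun i => (φi i).continuous).frequently
  have hdisj' : Disjoint (φ '' Λ) (φ '' Uᶜ) := by
    rw [Set.disjoint_left]
    intro a ha hb
    have : a ∈ φ '' Λᶜ ∩ φ '' Λ :=
      ⟨Set.image_mono (Set.compl_subset_compl.2 hΛU) hb, ha⟩
    rw [hdisj] at this
    exact this
  obtain ⟨δ, hδ, hthick⟩ := hdisj'.exists_thickenings (hΛ.image hφ) (hUc.image hφ).isClosed
  obtain ⟨m, hm⟩ := Filter.eventually_atTop.1 ((Metric.tendstoUniformly_iff.1 hconv) δ hδ)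
  refine ⟨m, fun i hi => ?_⟩
  rintro _ ⟨x, hx, rfl⟩
  set z := (φi i).symm (φ x) with hz
  by_cases hzU : z ∈ U
  · exact ⟨z, hzU, (φi i).apply_symm_apply _⟩
  · exfalso
    have h1 : dist (φ z) ((φi i) z) < δ := hm i hi z
    have h2 : (φi i) z = φ x := (φi i).apply_symm_apply _
    rw [h2] at h1
    have hzs : φ z ∈ Metric.thickening δ (φ '' Λ) := by
      apply Metric.mem_thickening_iff.2
      exact ⟨φ x, Set.mem_image_of_mem _ hx, h1⟩
    have hzt : φ z ∈ Metric.thickening δ (φ '' Uᶜ) :=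
      Metric.self_subset_thickening hδ _ (Set.mem_image_of_mem _ hzU)
    exact (hthick.ne_of_mem hzs hzt) rfl
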